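/- Let V be a finite-dimensional complex vector space, Ṽ = V ⊗ ℂ[t,t⁻¹], and α ∈ ℂ∖ℤ. The representation θ of Ŝ'(2,α) on W^{∞/2+*}(Ṽ) extends to a representation of a central extension of Der S'(2,α) = S'(2,α) ⋊ ℂ𝖧 by letting the exterior derivation 𝖧 act as θ(𝖧) = −Σ_uΣ_{m∈ℤ} :τ(u_m)ε(u_m'):; in particular [θ(𝖧),θ(𝔵_k)] = θ(𝔵_k), [θ(𝖧),θ(𝔥_k^α)] = −θ(𝔥_k^α), [θ(𝖧),θ(𝔭_k)] = θ(𝔭_k), [θ(𝖧),θ(𝔶_k^α)] = −θ(𝔶_k^α), and θ(𝖧) commutes with θ(ℒ_n^α), θ(E_n), θ(H_n), θ(F_n). -/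

import Mathlib

noncomputable section

open Function

/-- Kronecker delta `δ_{n,0}` with values in `ℂ`. -/
def deltaZ (n : ℤ) : ℂ := if n = 0 then 1 else 0

/-- The semi-infinite Weil module `W^{∞/2+*}(Ṽ)` attached to a loop space with homogeneous
basis `u_m` (`u : ι`, `m : ℤ`, `u_m = u ⊗ tᵐ`): a complex vector space `W` equipped with
operators `β(u_m)`, `γ(u_m')` (the symmetric part) and `τ(u_m)`, `ε(u_m')` (the exterior
part) obeying the canonical (anti)commutation relations, with a vacuum vector annihilated
by `β(x), τ(x)` for `x` of positive degree and by `γ(x'), ε(x')` for `x'` dual to vectors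
of nonpositive degree, and cyclically generated by the operators from the vacuum. -/
structure WeilModule (ι : Type*) [DecidableEq ι] (W : Type*) [AddCommGroup W] [Module ℂ W] where
  vac : W
  β : ι → ℤ → Module.End ℂ W
  γ : ι → ℤ → Module.End ℂ W
  τ : ι → ℤ → Module.End ℂ W
  ε : ι → ℤ → Module.End ℂ W
  rel_γβ : ∀ u m v k, γ u m * β v k - β v k * γ u m = if u = v ∧ m = k then 1 else 0
  rel_ββ : ∀ u m v k, β u m * β v k = β v k * β u m
  rel_γγ : ∀ u m v k, γ u m * γ v k = γ v k * γ u m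
  rel_ετ : ∀ u m v k, ε u m * τ v k + τ v k * ε u m = if u = v ∧ m = k then 1 else 0
  rel_ττ : ∀ u m v k, τ u m * τ v k + τ v k * τ u m = 0
  rel_εε : ∀ u m v k, ε u m * ε v k + ε v k * ε u m = 0
  rel_βτ : ∀ u m v k, β u m * τ v k = τ v k * β u m
  rel_βε : ∀ u m v k, β u m * ε v k = ε v k * β u m
  rel_γτ : ∀ u m v k, γ u m * τ v k = τ v k * γ u m
  rel_γε : ∀ u m v k, γ u m * ε v k = ε v k * γ u m
  vac_β : ∀ u m, 0 < m → β u m vac = 0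
  vac_γ : ∀ u m, m ≤ 0 → γ u m vac = 0
  vac_τ : ∀ u m, 0 < m → τ u m vac = 0
  vac_ε : ∀ u m, m ≤ 0 → ε u m vac = 0
  cyclic : ∀ p : Submodule ℂ W, vac ∈ p →
    (∀ u m, ∀ w ∈ p, β u m w ∈ p ∧ γ u m w ∈ p ∧ τ u m w ∈ p ∧ ε u m w ∈ p) → p = ⊤

namespace WeilModule

variable {ι W : Type*} [DecidableEq ι] [AddCommGroup W] [Module ℂ W]

/-- Normal ordering `:τ(u_a) ε(v_b'):`  (`ε(v_b')` is an annihilation operator iff `b ≤ 0`). -/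
def noτε (M : WeilModule ι W) (u : ι) (a : ℤ) (v : ι) (b : ℤ) : Module.End ℂ W :=
  if b ≤ 0 then M.τ u a * M.ε v b else -(M.ε v b * M.τ u a)

/-- Normal ordering `:β(u_a) γ(v_b'):`. -/
def noβγ (M : WeilModule ι W) (u : ι) (a : ℤ) (v : ι) (b : ℤ) : Module.End ℂ W :=
  if b ≤ 0 then M.β u a * M.γ v b else M.γ v b * M.β u a

/-- Normal ordering `:γ(v_b') β(u_a):`. -/
def noγβ (M : WeilModule ι W) (v : ι) (b : ℤ) (u : ι) (a : ℤ) : Module.End ℂ W :=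
  if 0 < b then M.γ v b * M.β u a else M.β u a * M.γ v b

end WeilModule

/-- The commutation relations of the centrally extended superconformal algebra
`Ŝ'(2,α)` (relations (4.8) together with the cocycle (4.9) of Kac–van de Leur),
holding pointwise on the submodule `P`, with the central element `𝒸` acting as `C • id`:
`Lr n ↦ ℒ_n^α`, `E n ↦ E_n`, `Hc n ↦ H_n`, `F n ↦ F_n` (even part),
`hh n ↦ 𝔥_n^α`, `pp n ↦ 𝔭_n`, `xx n ↦ 𝔵_n`, `yy n ↦ 𝔶_n^α` (odd part).
All supercommutators not listed in (4.8) vanish. -/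
def IsS2RepHatOn {W : Type*} [AddCommGroup W] [Module ℂ W] (P : Submodule ℂ W)
    (α C : ℂ) (Lr E Hc F hh pp xx yy : ℤ → Module.End ℂ W) : Prop :=
  (∀ n k, ∀ w ∈ P, (Lr n * Lr k - Lr k * Lr n) w
      = ((n : ℂ) - (k : ℂ)) • Lr (n + k) w
        + (C * (1 / 12) * (n : ℂ) * ((n : ℂ) ^ 2 - 1) * deltaZ (n + k)) • w) ∧
  (∀ n k, ∀ w ∈ P, (E n * F k - F k * E n) w
      = Hc (n + k) w + (C * (1 / 6) * (n : ℂ) * deltaZ (n + k)) • w) ∧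
  (∀ n k, ∀ w ∈ P, (Hc n * E k - E k * Hc n) w = (2 : ℂ) • E (n + k) w) ∧
  (∀ n k, ∀ w ∈ P, (Hc n * F k - F k * Hc n) w = (-2 : ℂ) • F (n + k) w) ∧
  (∀ n k, ∀ w ∈ P, (Hc n * Hc k - Hc k * Hc n) w
      = (C * (1 / 3) * (n : ℂ) * deltaZ (n + k)) • w) ∧
  (∀ n k, ∀ w ∈ P, (Lr n * E k - E k * Lr n) w = (-(k : ℂ)) • E (n + k) w) ∧
  (∀ n k, ∀ w ∈ P, (Lr n * Hc k - Hc k * Lr n) w = (-(k : ℂ)) • Hc (n + k) w) ∧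
  (∀ n k, ∀ w ∈ P, (Lr n * F k - F k * Lr n) w = (-(k : ℂ)) • F (n + k) w) ∧
  (∀ n k, ∀ w ∈ P, (Lr n * hh k - hh k * Lr n) w
      = (((n : ℂ) - 2 * (k : ℂ) + 1 - α) / 2) • hh (n + k) w) ∧
  (∀ n k, ∀ w ∈ P, (Lr n * pp k - pp k * Lr n) w
      = (((n : ℂ) - 2 * (k : ℂ) - 1 + α) / 2) • pp (n + k) w) ∧
  (∀ n k, ∀ w ∈ P, (Lr n * xx k - xx k * Lr n) w
      = (((n : ℂ) - 2 * (k : ℂ) - 1 + α) / 2) • xx (n + k) w) ∧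
  (∀ n k, ∀ w ∈ P, (Lr n * yy k - yy k * Lr n) w
      = (((n : ℂ) - 2 * (k : ℂ) + 1 - α) / 2) • yy (n + k) w) ∧
  (∀ n k, ∀ w ∈ P, (E n * yy k - yy k * E n) w = hh (n + k) w) ∧
  (∀ n k, ∀ w ∈ P, (F n * hh k - hh k * F n) w = yy (n + k) w) ∧
  (∀ n k, ∀ w ∈ P, (E n * pp k - pp k * E n) w = xx (n + k) w) ∧
  (∀ n k, ∀ w ∈ P, (F n * xx k - xx k * F n) w = pp (n + k) w) ∧
  (∀ n k, ∀ w ∈ P, (Hc n * hh k - hh k * Hc n) w = hh (n + k) w) ∧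
  (∀ n k, ∀ w ∈ P, (Hc n * yy k - yy k * Hc n) w = -(yy (n + k) w)) ∧
  (∀ n k, ∀ w ∈ P, (Hc n * xx k - xx k * Hc n) w = xx (n + k) w) ∧
  (∀ n k, ∀ w ∈ P, (Hc n * pp k - pp k * Hc n) w = -(pp (n + k) w)) ∧
  (∀ n k, ∀ w ∈ P, (hh n * xx k + xx k * hh n) w
      = ((k : ℂ) + 1 - (n : ℂ) - α) • E (n + k) w) ∧
  (∀ n k, ∀ w ∈ P, (pp n * yy k + yy k * pp n) w
      = ((k : ℂ) - (n : ℂ) - 1 + α) • F (n + k) w) ∧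
  (∀ n k, ∀ w ∈ P, (hh n * pp k + pp k * hh n) w
      = Lr (n + k) w - (((k : ℂ) - (n : ℂ) + 1 - α) / 2) • Hc (n + k) w
        + (C * (1 / 6) * (((n : ℂ) - 1 + (α + 1) / 2) ^ 2 - 1 / 4) * deltaZ (n + k)) • w) ∧
  (∀ n k, ∀ w ∈ P, (xx n * yy k + yy k * xx n) w
      = -(Lr (n + k) w) + (((k : ℂ) - (n : ℂ) - 1 + α) / 2) • Hc (n + k) w
        - (C * (1 / 6) * ((-(n : ℂ) - 1 + (α + 1) / 2) ^ 2 - 1 / 4) * deltaZ (n + k)) • w) ∧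
  -- all remaining supercommutators vanish
  (∀ n k, ∀ w ∈ P, (E n * E k - E k * E n) w = 0) ∧
  (∀ n k, ∀ w ∈ P, (F n * F k - F k * F n) w = 0) ∧
  (∀ n k, ∀ w ∈ P, (E n * hh k - hh k * E n) w = 0) ∧
  (∀ n k, ∀ w ∈ P, (E n * xx k - xx k * E n) w = 0) ∧
  (∀ n k, ∀ w ∈ P, (F n * pp k - pp k * F n) w = 0) ∧
  (∀ n k, ∀ w ∈ P, (F n * yy k - yy k * F n) w = 0) ∧
  (∀ n k, ∀ w ∈ P, (hh n * hh k + hh k * hh n) w = 0) ∧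
  (∀ n k, ∀ w ∈ P, (hh n * yy k + yy k * hh n) w = 0) ∧
  (∀ n k, ∀ w ∈ P, (pp n * pp k + pp k * pp n) w = 0) ∧
  (∀ n k, ∀ w ∈ P, (pp n * xx k + xx k * pp n) w = 0) ∧
  (∀ n k, ∀ w ∈ P, (xx n * xx k + xx k * xx n) w = 0) ∧
  (∀ n k, ∀ w ∈ P, (yy n * yy k + yy k * yy n) w = 0)

/-! ### Auxiliary machinery for Statement 6 -/

namespace DerhatAux

open WeilModule

variable {ι W : Type*} [DecidableEq ι] [AddCommGroup W] [Module ℂ W]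

/-- Endomorphism version of `AddMonoidHom.map_finsum`. -/
lemma end_map_finsum {σ : Type*} (g : Module.End ℂ W) {f : σ → W}
    (hf : (Function.support f).Finite) : g (∑ᶠ i, f i) = ∑ᶠ i, g (f i) :=
  g.toAddMonoidHom.map_finsum hf

lemma ite_one_zero_comm (c : Prop) [Decidable c] (x : Module.End ℂ W) :
    x * (if c then (1 : Module.End ℂ W) else 0) = (if c then 1 else 0) * x := by
  split_ifs <;> simp

lemma ite_mul_congr {c : Prop} [Decidable c] {X Y : Module.End ℂ W} (h : c → X = Y) :
    (if c then (1 : Module.End ℂ W) else 0) * X = (if c then 1 else 0) * Y := by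
  split_ifs with hc
  · rw [h hc]
  · rw [zero_mul, zero_mul]

/-- The (un-normally-ordered) quadratic term `τ(u_m) ε(u_m')` at index `q = (u, m)`. -/
def Tq (M : WeilModule ι W) (q : ι × ℤ) : Module.End ℂ W :=
  M.τ q.1 q.2 * M.ε q.1 q.2

variable (M : WeilModule ι W)

lemma noτε_diag (q : ι × ℤ) :
    M.noτε q.1 q.2 q.1 q.2 = Tq M q - (if q.2 ≤ 0 then 0 else 1) := by
  unfold WeilModule.noτε Tq
  split_ifs with h
  · simp
  · have h1 : M.ε q.1 q.2 * M.τ q.1 q.2 + M.τ q.1 q.2 * M.ε q.1 q.2 = 1 := by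
      simpa using M.rel_ετ q.1 q.2 q.1 q.2
    have h2 : M.ε q.1 q.2 * M.τ q.1 q.2 = 1 - M.τ q.1 q.2 * M.ε q.1 q.2 := by
      rw [eq_sub_iff_add_eq]; exact h1
    rw [h2]; abel

/-- The commutator with the diagonal normally ordered term equals the commutator with
the plain quadratic term. -/
lemma comm_reduce (X : Module.End ℂ W) (q : ι × ℤ) :
    X * M.noτε q.1 q.2 q.1 q.2 - M.noτε q.1 q.2 q.1 q.2 * X
      = X * Tq M q - Tq M q * X := by
  rw [noτε_diag]
  split_ifs with h
  · simp
  · rw [mul_sub, sub_mul, mul_one, one_mul]; abel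

lemma ε_mul_T (u : ι) (m : ℤ) (q : ι × ℤ) :
    M.ε u m * Tq M q
      = Tq M q * M.ε u m + (if u = q.1 ∧ m = q.2 then 1 else 0) * M.ε q.1 q.2 := by
  have h1 : M.ε u m * M.τ q.1 q.2
      = (if u = q.1 ∧ m = q.2 then 1 else 0) - M.τ q.1 q.2 * M.ε u m :=
    eq_sub_of_add_eq (M.rel_ετ u m q.1 q.2)
  have h2 : M.ε u m * M.ε q.1 q.2 = -(M.ε q.1 q.2 * M.ε u m) :=
    eq_neg_of_add_eq_zero_left (M.rel_εε u m q.1 q.2)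
  show M.ε u m * (M.τ q.1 q.2 * M.ε q.1 q.2)
      = M.τ q.1 q.2 * M.ε q.1 q.2 * M.ε u m + _
  rw [← mul_assoc, h1, sub_mul, mul_assoc, h2, mul_neg, sub_neg_eq_add, ← mul_assoc]
  abel

lemma τ_mul_T (u : ι) (m : ℤ) (q : ι × ℤ) :
    M.τ u m * Tq M q
      = Tq M q * M.τ u m - (if q.1 = u ∧ q.2 = m then 1 else 0) * M.τ q.1 q.2 := by
  have h1 : M.τ u m * M.τ q.1 q.2 = -(M.τ q.1 q.2 * M.τ u m) :=
    eq_neg_of_add_eq_zero_left (M.rel_ττ u m q.1 q.2)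
  have h2 : M.τ u m * M.ε q.1 q.2
      = (if q.1 = u ∧ q.2 = m then 1 else 0) - M.ε q.1 q.2 * M.τ u m :=
    eq_sub_of_add_eq' (M.rel_ετ q.1 q.2 u m)
  show M.τ u m * (M.τ q.1 q.2 * M.ε q.1 q.2)
      = M.τ q.1 q.2 * M.ε q.1 q.2 * M.τ u m - _
  rw [← mul_assoc, h1, neg_mul, mul_assoc, h2, mul_sub, neg_sub,
    ite_one_zero_comm, ← mul_assoc]

lemma β_mul_T (u : ι) (m : ℤ) (q : ι × ℤ) :
    M.β u m * Tq M q = Tq M q * M.β u m := by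
  show M.β u m * (M.τ q.1 q.2 * M.ε q.1 q.2) = M.τ q.1 q.2 * M.ε q.1 q.2 * M.β u m
  rw [← mul_assoc, M.rel_βτ, mul_assoc, M.rel_βε, ← mul_assoc]

lemma γ_mul_T (u : ι) (m : ℤ) (q : ι × ℤ) :
    M.γ u m * Tq M q = Tq M q * M.γ u m := by
  show M.γ u m * (M.τ q.1 q.2 * M.ε q.1 q.2) = M.τ q.1 q.2 * M.ε q.1 q.2 * M.γ u m
  rw [← mul_assoc, M.rel_γτ, mul_assoc, M.rel_γε, ← mul_assoc]

lemma mul_comm_Tq {X Y : Module.End ℂ W} (q : ι × ℤ)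
    (hX : X * Tq M q = Tq M q * X) (hY : Y * Tq M q = Tq M q * Y) :
    (X * Y) * Tq M q = Tq M q * (X * Y) := by
  rw [mul_assoc, hY, ← mul_assoc, hX, mul_assoc]

lemma smul_commutator (c : ℂ) (X Y : Module.End ℂ W) :
    (c • X) * Y - Y * (c • X) = c • (X * Y - Y * X) := by
  rw [smul_mul_assoc, mul_smul_comm, smul_sub]

lemma noβγ_comm_Tq (u : ι) (a : ℤ) (v : ι) (b : ℤ) (q : ι × ℤ) :
    M.noβγ u a v b * Tq M q = Tq M q * M.noβγ u a v b := by
  unfold WeilModule.noβγ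
  split_ifs
  · exact mul_comm_Tq M q (β_mul_T M u a q) (γ_mul_T M v b q)
  · exact mul_comm_Tq M q (γ_mul_T M v b q) (β_mul_T M u a q)

/-- Commutator of `X ε(u_m')` with `Tq q`, for `X` commuting with all `Tq`. -/
lemma Xε_comm_T (X : Module.End ℂ W) (hX : ∀ q : ι × ℤ, X * Tq M q = Tq M q * X)
    (u : ι) (m : ℤ) (q : ι × ℤ) :
    (X * M.ε u m) * Tq M q - Tq M q * (X * M.ε u m)
      = (if u = q.1 ∧ m = q.2 then 1 else 0) * (X * M.ε q.1 q.2) := by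
  rw [mul_assoc, ε_mul_T, mul_add, ← mul_assoc X (Tq M q), hX q,
    ← mul_assoc X (if u = q.1 ∧ m = q.2 then 1 else 0), ite_one_zero_comm]
  noncomm_ring

/-- Commutator of `X τ(u_m)` with `Tq q`, for `X` commuting with all `Tq`. -/
lemma Xτ_comm_T (X : Module.End ℂ W) (hX : ∀ q : ι × ℤ, X * Tq M q = Tq M q * X)
    (u : ι) (m : ℤ) (q : ι × ℤ) :
    (X * M.τ u m) * Tq M q - Tq M q * (X * M.τ u m)
      = -((if q.1 = u ∧ q.2 = m then 1 else 0) * (X * M.τ q.1 q.2)) := by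
  rw [mul_assoc, τ_mul_T, mul_sub, ← mul_assoc X (Tq M q), hX q,
    ← mul_assoc X (if q.1 = u ∧ q.2 = m then 1 else 0), ite_one_zero_comm]
  noncomm_ring

/-- Commutator of `τ(u₁ a) ε(u₂ b')` with `Tq q`. -/
lemma τε_comm_T (u1 : ι) (a : ℤ) (u2 : ι) (b : ℤ) (q : ι × ℤ) :
    (M.τ u1 a * M.ε u2 b) * Tq M q - Tq M q * (M.τ u1 a * M.ε u2 b)
      = (if u2 = q.1 ∧ b = q.2 then 1 else 0) * (M.τ u1 a * M.ε q.1 q.2)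
        - (if q.1 = u1 ∧ q.2 = a then 1 else 0) * (M.τ q.1 q.2 * M.ε u2 b) := by
  rw [mul_assoc, ε_mul_T, mul_add, ← mul_assoc (M.τ u1 a) (Tq M q), τ_mul_T,
    ← mul_assoc (M.τ u1 a) (if u2 = q.1 ∧ b = q.2 then 1 else 0), ite_one_zero_comm]
  noncomm_ring

/-- Commutator of `ε(u₂ b') τ(u₁ a)` with `Tq q`. -/
lemma ετ_comm_T (u1 : ι) (a : ℤ) (u2 : ι) (b : ℤ) (q : ι × ℤ) :
    (M.ε u2 b * M.τ u1 a) * Tq M q - Tq M q * (M.ε u2 b * M.τ u1 a)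
      = (if u2 = q.1 ∧ b = q.2 then 1 else 0) * (M.ε q.1 q.2 * M.τ u1 a)
        - (if q.1 = u1 ∧ q.2 = a then 1 else 0) * (M.ε u2 b * M.τ q.1 q.2) := by
  rw [mul_assoc, τ_mul_T, mul_sub, ← mul_assoc (M.ε u2 b) (Tq M q), ε_mul_T,
    ← mul_assoc (M.ε u2 b) (if q.1 = u1 ∧ q.2 = a then 1 else 0), ite_one_zero_comm]
  noncomm_ring

/-- Commutator of the normally ordered `:τ(u_a)ε(u_b'):` with `Tq q`. -/
lemma noτε_comm_T (u : ι) (a b : ℤ) (q : ι × ℤ) :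
    M.noτε u a u b * Tq M q - Tq M q * M.noτε u a u b
      = (if u = q.1 ∧ b = q.2 then 1 else 0) * M.noτε u a u b
        - (if q.1 = u ∧ q.2 = a then 1 else 0) * M.noτε u a u b := by
  by_cases h : b ≤ 0
  · have hn : M.noτε u a u b = M.τ u a * M.ε u b := by
      unfold WeilModule.noτε; rw [if_pos h]
    rw [hn, τε_comm_T]
    congr 1
    · exact ite_mul_congr (X := M.τ u a * M.ε q.1 q.2) (Y := M.τ u a * M.ε u b)
        fun hc => by rw [← hc.1, ← hc.2]
    · exact ite_mul_congr (X := M.τ q.1 q.2 * M.ε u b) (Y := M.τ u a * M.ε u b)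
        fun hc => by rw [hc.1, hc.2]
  · have hn : M.noτε u a u b = -(M.ε u b * M.τ u a) := by
      unfold WeilModule.noτε; rw [if_neg h]
    rw [hn]
    have h0 := ετ_comm_T M u a u b q
    have e1 : (if u = q.1 ∧ b = q.2 then (1 : Module.End ℂ W) else 0) * (M.ε q.1 q.2 * M.τ u a)
        = (if u = q.1 ∧ b = q.2 then 1 else 0) * (M.ε u b * M.τ u a) :=
      ite_mul_congr fun hc => by rw [← hc.1, ← hc.2]
    have e2 : (if q.1 = u ∧ q.2 = a then (1 : Module.End ℂ W) else 0) * (M.ε u b * M.τ q.1 q.2)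
        = (if q.1 = u ∧ q.2 = a then 1 else 0) * (M.ε u b * M.τ u a) :=
      ite_mul_congr fun hc => by rw [hc.1, hc.2]
    rw [e1, e2] at h0
    calc (-(M.ε u b * M.τ u a)) * Tq M q - Tq M q * (-(M.ε u b * M.τ u a))
        = -((M.ε u b * M.τ u a) * Tq M q - Tq M q * (M.ε u b * M.τ u a)) := by noncomm_ring
      _ = -((if u = q.1 ∧ b = q.2 then 1 else 0) * (M.ε u b * M.τ u a)
            - (if q.1 = u ∧ q.2 = a then 1 else 0) * (M.ε u b * M.τ u a)) := by rw [h0]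
      _ = (if u = q.1 ∧ b = q.2 then 1 else 0) * -(M.ε u b * M.τ u a)
            - (if q.1 = u ∧ q.2 = a then 1 else 0) * -(M.ε u b * M.τ u a) := by noncomm_ring

/-- Single-point delta sums. -/
lemma finsum_delta1 (u : ι) (b : ℤ) (c : ℂ) (Z : Module.End ℂ W) (w : W) :
    ∑ᶠ q : ι × ℤ,
        (c • ((if u = q.1 ∧ b = q.2 then (1 : Module.End ℂ W) else 0) * Z)) w
      = (c • Z) w := by
  rw [finsum_eq_single _ ((u, b) : ι × ℤ)]
  · rw [if_pos ⟨rfl, rfl⟩, one_mul]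
  · intro q hq
    rw [if_neg fun h : u = q.1 ∧ b = q.2 => hq (Prod.ext_iff.mpr ⟨h.1.symm, h.2.symm⟩),
      zero_mul, smul_zero]
    rfl

lemma finsum_delta2 (u : ι) (a : ℤ) (c : ℂ) (Z : Module.End ℂ W) (w : W) :
    ∑ᶠ q : ι × ℤ,
        (c • ((if q.1 = u ∧ q.2 = a then (1 : Module.End ℂ W) else 0) * Z)) w
      = (c • Z) w := by
  rw [finsum_eq_single _ ((u, a) : ι × ℤ)]
  · rw [if_pos ⟨rfl, rfl⟩, one_mul]
  · intro q hq
    rw [if_neg fun h : q.1 = u ∧ q.2 = a => hq (Prod.ext_iff.mpr ⟨h.1, h.2⟩), zero_mul,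
      smul_zero]
    rfl

lemma supp_delta1 (u : ι) (b : ℤ) (c : ℂ) (Z : Module.End ℂ W) (w : W) :
    (Function.support fun q : ι × ℤ =>
      (c • ((if u = q.1 ∧ b = q.2 then (1 : Module.End ℂ W) else 0) * Z)) w).Finite := by
  refine (Set.finite_singleton ((u, b) : ι × ℤ)).subset fun q hq => ?_
  simp only [Function.mem_support] at hq
  simp only [Set.mem_singleton_iff]
  by_contra hne
  exact hq (by rw [if_neg fun h : u = q.1 ∧ b = q.2 => hne (Prod.ext_iff.mpr ⟨h.1.symm, h.2.symm⟩),
    zero_mul, smul_zero]; rfl)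

lemma supp_delta2 (u : ι) (a : ℤ) (c : ℂ) (Z : Module.End ℂ W) (w : W) :
    (Function.support fun q : ι × ℤ =>
      (c • ((if q.1 = u ∧ q.2 = a then (1 : Module.End ℂ W) else 0) * Z)) w).Finite := by
  refine (Set.finite_singleton ((u, a) : ι × ℤ)).subset fun q hq => ?_
  simp only [Function.mem_support] at hq
  simp only [Set.mem_singleton_iff]
  by_contra hne
  exact hq (by rw [if_neg fun h : q.1 = u ∧ q.2 = a => hne (Prod.ext_iff.mpr ⟨h.1, h.2⟩),
    zero_mul, smul_zero]; rfl)

/-- Sum of commutators vanishes if the operator commutes with every `Tq`. -/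
lemma sumcomm_zero (X : Module.End ℂ W)
    (hX : ∀ q : ι × ℤ, X * Tq M q = Tq M q * X) (w : W) :
    ∑ᶠ q : ι × ℤ,
        ((X * M.noτε q.1 q.2 q.1 q.2 - M.noτε q.1 q.2 q.1 q.2 * X) w) = 0 := by
  have key : ∀ q : ι × ℤ,
      (X * M.noτε q.1 q.2 q.1 q.2 - M.noτε q.1 q.2 q.1 q.2 * X) w = 0 := by
    intro q
    rw [comm_reduce, hX q, sub_self]
    rfl
  rw [finsum_congr key, finsum_zero]

/-- Summed commutator for the `X ε(u_m')` family (with a scalar). -/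
lemma sumcomm_Xε (c : ℂ) (X : Module.End ℂ W)
    (hX : ∀ q : ι × ℤ, X * Tq M q = Tq M q * X) (u : ι) (m : ℤ) (w : W) :
    ∑ᶠ q : ι × ℤ,
        (((c • (X * M.ε u m)) * M.noτε q.1 q.2 q.1 q.2
          - M.noτε q.1 q.2 q.1 q.2 * (c • (X * M.ε u m))) w)
      = (c • (X * M.ε u m)) w := by
  have key : ∀ q : ι × ℤ,
      ((c • (X * M.ε u m)) * M.noτε q.1 q.2 q.1 q.2
        - M.noτε q.1 q.2 q.1 q.2 * (c • (X * M.ε u m))) w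
      = (c • ((if u = q.1 ∧ m = q.2 then (1 : Module.End ℂ W) else 0) * (X * M.ε u m))) w := by
    intro q
    have op : (c • (X * M.ε u m)) * M.noτε q.1 q.2 q.1 q.2
        - M.noτε q.1 q.2 q.1 q.2 * (c • (X * M.ε u m))
        = c • ((if u = q.1 ∧ m = q.2 then (1 : Module.End ℂ W) else 0) * (X * M.ε u m)) := by
      rw [smul_commutator, comm_reduce, Xε_comm_T M X hX u m q]
      congr 1
      exact ite_mul_congr (X := X * M.ε q.1 q.2) (Y := X * M.ε u m)
        fun hc => by rw [← hc.1, ← hc.2]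
    rw [op]
  rw [finsum_congr key, finsum_delta1]

/-- Summed commutator for the `X τ(u_m)` family (without scalar). -/
lemma sumcomm_Xτ' (X : Module.End ℂ W)
    (hX : ∀ q : ι × ℤ, X * Tq M q = Tq M q * X) (u : ι) (m : ℤ) (w : W) :
    ∑ᶠ q : ι × ℤ,
        (((X * M.τ u m) * M.noτε q.1 q.2 q.1 q.2
          - M.noτε q.1 q.2 q.1 q.2 * (X * M.τ u m)) w)
      = -((X * M.τ u m) w) := by
  have key : ∀ q : ι × ℤ,
      ((X * M.τ u m) * M.noτε q.1 q.2 q.1 q.2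
        - M.noτε q.1 q.2 q.1 q.2 * (X * M.τ u m)) w
      = ((-1 : ℂ) • ((if q.1 = u ∧ q.2 = m then (1 : Module.End ℂ W) else 0)
          * (X * M.τ u m))) w := by
    intro q
    have op : (X * M.τ u m) * M.noτε q.1 q.2 q.1 q.2
        - M.noτε q.1 q.2 q.1 q.2 * (X * M.τ u m)
        = (-1 : ℂ) • ((if q.1 = u ∧ q.2 = m then (1 : Module.End ℂ W) else 0)
            * (X * M.τ u m)) := by
      rw [comm_reduce, Xτ_comm_T M X hX u m q, neg_one_smul]
      congr 1
      exact ite_mul_congr (X := X * M.τ q.1 q.2) (Y := X * M.τ u m)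
        fun hc => by rw [hc.1, hc.2]
    rw [op]
  rw [finsum_congr key, finsum_delta2, neg_one_smul, LinearMap.neg_apply]

/-- Summed commutator for the `ℒ`-family summands. -/
lemma sumcomm_L (c : ℂ) (u : ι) (a b : ℤ) (w : W) :
    ∑ᶠ q : ι × ℤ,
        (((c • (M.noτε u a u b + M.noβγ u a u b)) * M.noτε q.1 q.2 q.1 q.2
          - M.noτε q.1 q.2 q.1 q.2 * (c • (M.noτε u a u b + M.noβγ u a u b))) w) = 0 := by
  have key : ∀ q : ι × ℤ,
      ((c • (M.noτε u a u b + M.noβγ u a u b)) * M.noτε q.1 q.2 q.1 q.2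
        - M.noτε q.1 q.2 q.1 q.2 * (c • (M.noτε u a u b + M.noβγ u a u b))) w
      = (c • ((if u = q.1 ∧ b = q.2 then (1 : Module.End ℂ W) else 0) * M.noτε u a u b)) w
        - (c • ((if q.1 = u ∧ q.2 = a then (1 : Module.End ℂ W) else 0) * M.noτε u a u b)) w := by
    intro q
    have op : (c • (M.noτε u a u b + M.noβγ u a u b)) * M.noτε q.1 q.2 q.1 q.2
        - M.noτε q.1 q.2 q.1 q.2 * (c • (M.noτε u a u b + M.noβγ u a u b))
        = c • ((if u = q.1 ∧ b = q.2 then (1 : Module.End ℂ W) else 0) * M.noτε u a u b)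
          - c • ((if q.1 = u ∧ q.2 = a then (1 : Module.End ℂ W) else 0) * M.noτε u a u b) := by
      rw [smul_commutator, comm_reduce, ← smul_sub]
      congr 1
      have expand : (M.noτε u a u b + M.noβγ u a u b) * Tq M q
          - Tq M q * (M.noτε u a u b + M.noβγ u a u b)
          = (M.noτε u a u b * Tq M q - Tq M q * M.noτε u a u b)
            + (M.noβγ u a u b * Tq M q - Tq M q * M.noβγ u a u b) := by noncomm_ring
      rw [expand, noβγ_comm_Tq, sub_self, add_zero, noτε_comm_T]
    rw [op, LinearMap.sub_apply]
  rw [finsum_congr key,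
    finsum_sub_distrib (supp_delta1 u b c (M.noτε u a u b) w)
      (supp_delta2 u a c (M.noτε u a u b) w),
    finsum_delta1, finsum_delta2, sub_self]

/-- The master commutation lemma. -/
lemma master (Dop A : Module.End ℂ W) (c s : ℂ) (f : ι × ℤ → Module.End ℂ W)
    (hfinT : ∀ w : W, (Function.support fun q : ι × ℤ => M.noτε q.1 q.2 q.1 q.2 w).Finite)
    (hfinA : ∀ w : W, (Function.support fun p : ι × ℤ => f p w).Finite)
    (hA : ∀ w : W, A w = c • ∑ᶠ p : ι × ℤ, f p w)
    (hD : ∀ w : W, Dop w = -∑ᶠ q : ι × ℤ, M.noτε q.1 q.2 q.1 q.2 w)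
    (hcomm : ∀ (p : ι × ℤ) (w : W),
      ∑ᶠ q : ι × ℤ, ((f p * M.noτε q.1 q.2 q.1 q.2 - M.noτε q.1 q.2 q.1 q.2 * f p) w)
        = s • f p w) :
    Dop * A - A * Dop = s • A := by
  ext w
  rw [LinearMap.sub_apply, Module.End.mul_apply, Module.End.mul_apply, LinearMap.smul_apply]
  have e1 : Dop (A w) = c • ∑ᶠ p : ι × ℤ, Dop (f p w) := by
    rw [hA w, map_smul, end_map_finsum Dop (hfinA w)]
  have e2 : A (Dop w) = c • ∑ᶠ p : ι × ℤ, f p (Dop w) := hA (Dop w)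
  have e4 : ∀ p : ι × ℤ, f p (Dop w) = -∑ᶠ q : ι × ℤ, f p (M.noτε q.1 q.2 q.1 q.2 w) := by
    intro p
    rw [hD w, map_neg, end_map_finsum (f p) (hfinT w)]
  have hs1 : (Function.support fun p : ι × ℤ => Dop (f p w)).Finite := by
    refine (hfinA w).subset fun p hp => ?_
    simp only [Function.mem_support] at hp ⊢
    intro h0
    exact hp (by rw [h0, map_zero])
  have hs2 : (Function.support fun p : ι × ℤ => f p (Dop w)).Finite := hfinA (Dop w)
  have e5 : ∀ p : ι × ℤ, Dop (f p w) - f p (Dop w) = s • f p w := by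
    intro p
    have hq1 : (Function.support fun q : ι × ℤ =>
        f p (M.noτε q.1 q.2 q.1 q.2 w)).Finite := by
      refine (hfinT w).subset fun q hq => ?_
      simp only [Function.mem_support] at hq ⊢
      intro h0
      exact hq (by rw [h0, map_zero])
    rw [hD (f p w), e4 p, neg_sub_neg, ← finsum_sub_distrib hq1 (hfinT (f p w)),
      ← hcomm p w]
    exact finsum_congr fun q => by
      rw [LinearMap.sub_apply, Module.End.mul_apply, Module.End.mul_apply]
  calc Dop (A w) - A (Dop w)
      = c • ((∑ᶠ p : ι × ℤ, Dop (f p w)) - ∑ᶠ p : ι × ℤ, f p (Dop w)) := by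
        rw [e1, e2, smul_sub]
    _ = c • ∑ᶠ p : ι × ℤ, (Dop (f p w) - f p (Dop w)) := by
        rw [finsum_sub_distrib hs1 hs2]
    _ = c • ∑ᶠ p : ι × ℤ, s • f p w := by rw [finsum_congr e5]
    _ = s • A w := by
        rw [← smul_finsum' s (hfinA w), hA w]
        exact smul_comm c s _

end DerhatAux

open WeilModule in
/-- For `α ∈ ℂ∖ℤ`, the representation `θ` of `Ŝ'(2,α)` on
`W^{∞/2+*}(Ṽ)` extends to a representation of a central extension of
`Der S'(2,α) = S'(2,α) ⋊ ℂ𝖧`, the exterior derivation `𝖧` acting as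
`θ(𝖧) = −Σ_u Σ_m :τ(u_m)ε(u_m'):`; in particular `[θ(𝖧),θ(𝔵_k)] = θ(𝔵_k)`,
`[θ(𝖧),θ(𝔥_k^α)] = −θ(𝔥_k^α)`, `[θ(𝖧),θ(𝔭_k)] = θ(𝔭_k)`,
`[θ(𝖧),θ(𝔶_k^α)] = −θ(𝔶_k^α)`, and `θ(𝖧)` commutes with
`θ(ℒ_n^α), θ(E_n), θ(H_n), θ(F_n)`. -/
theorem derhat_rep_on_weil_complex
    (ι : Type*) [Fintype ι] [DecidableEq ι]
    (V : Type*) [AddCommGroup V] [Module ℂ V] (bV : Module.Basis ι ℂ V)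
    (W : Type*) [AddCommGroup W] [Module ℂ W]
    (M : WeilModule ι W) (alf : ℂ) (half : ∀ k : ℤ, alf ≠ (k : ℂ))
    (ΘL ΘH Θh Θp ΘE ΘF Θx Θy : ℤ → Module.End ℂ W)
    -- local finiteness of all the quadratic sums
    (hfinL : ∀ (n : ℤ) (w : W), (Function.support fun p : ι × ℤ =>
        (((p.2 : ℂ) - alf / 2) • (M.noτε p.1 ((p.2 + n : ℤ)) p.1 p.2 + M.noβγ p.1 ((p.2 + n : ℤ)) p.1 p.2)) w).Finite)
    (hfinH : ∀ (n : ℤ) (w : W), (Function.support fun p : ι × ℤ =>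
        (M.noβγ p.1 p.2 p.1 ((p.2 + n : ℤ))) w).Finite)
    (hfinh : ∀ (n : ℤ) (w : W), (Function.support fun p : ι × ℤ =>
        (M.γ p.1 ((p.2 + n : ℤ)) * M.τ p.1 p.2) w).Finite)
    (hfinp : ∀ (n : ℤ) (w : W), (Function.support fun p : ι × ℤ =>
        (((p.2 : ℂ) - alf / 2) • (M.β p.1 ((p.2 - n : ℤ)) * M.ε p.1 p.2)) w).Finite)
    (hfinE : ∀ (n : ℤ) (w : W), (Function.support fun p : ι × ℤ =>
        (M.γ p.1 p.2 * M.γ p.1 ((1 - p.2 + n : ℤ))) w).Finite)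
    (hfinF : ∀ (n : ℤ) (w : W), (Function.support fun p : ι × ℤ =>
        (M.β p.1 p.2 * M.β p.1 ((1 - p.2 - n : ℤ))) w).Finite)
    (hfiny : ∀ (n : ℤ) (w : W), (Function.support fun p : ι × ℤ =>
        (M.β p.1 p.2 * M.τ p.1 ((1 - p.2 - n : ℤ))) w).Finite)
    (hfinx : ∀ (n : ℤ) (w : W), (Function.support fun p : ι × ℤ =>
        (((p.2 : ℂ) - alf / 2) • (M.γ p.1 ((1 - p.2 + n : ℤ)) * M.ε p.1 p.2)) w).Finite)
    -- the defining formulas (5.2) for the operators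
    (hΘL : ∀ (n : ℤ) (w : W), ΘL n w = -∑ᶠ p : ι × ℤ, (((p.2 : ℂ) - alf / 2) • (M.noτε p.1 ((p.2 + n : ℤ)) p.1 p.2 + M.noβγ p.1 ((p.2 + n : ℤ)) p.1 p.2)) w)
    (hΘH : ∀ (n : ℤ) (w : W), ΘH n w = -∑ᶠ p : ι × ℤ, (M.noβγ p.1 p.2 p.1 ((p.2 + n : ℤ))) w)
    (hΘh : ∀ (n : ℤ) (w : W), Θh n w = ∑ᶠ p : ι × ℤ, (M.γ p.1 ((p.2 + n : ℤ)) * M.τ p.1 p.2) w)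
    (hΘp : ∀ (n : ℤ) (w : W), Θp n w = ∑ᶠ p : ι × ℤ, (((p.2 : ℂ) - alf / 2) • (M.β p.1 ((p.2 - n : ℤ)) * M.ε p.1 p.2)) w)
    (hΘE : ∀ (n : ℤ) (w : W), ΘE n w = -((Complex.I / 2) • ∑ᶠ p : ι × ℤ, (M.γ p.1 p.2 * M.γ p.1 ((1 - p.2 + n : ℤ))) w))
    (hΘF : ∀ (n : ℤ) (w : W), ΘF n w = -((Complex.I / 2) • ∑ᶠ p : ι × ℤ, (M.β p.1 p.2 * M.β p.1 ((1 - p.2 - n : ℤ))) w))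
    (hΘy : ∀ (n : ℤ) (w : W), Θy n w = Complex.I • ∑ᶠ p : ι × ℤ, (M.β p.1 p.2 * M.τ p.1 ((1 - p.2 - n : ℤ))) w)
    (hΘx : ∀ (n : ℤ) (w : W), Θx n w = -(Complex.I • ∑ᶠ p : ι × ℤ, (((p.2 : ℂ) - alf / 2) • (M.γ p.1 ((1 - p.2 + n : ℤ)) * M.ε p.1 p.2)) w))
    (ΘHd : Module.End ℂ W)
    (hfinHd : ∀ w : W, (Function.support fun p : ι × ℤ =>
        (M.noτε p.1 p.2 p.1 p.2) w).Finite)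
    (hΘHd : ∀ w : W, ΘHd w = -∑ᶠ p : ι × ℤ, (M.noτε p.1 p.2 p.1 p.2) w) :
    (∀ k : ℤ, ΘHd * Θx k - Θx k * ΘHd = Θx k) ∧
    (∀ k : ℤ, ΘHd * Θh k - Θh k * ΘHd = -Θh k) ∧
    (∀ k : ℤ, ΘHd * Θp k - Θp k * ΘHd = Θp k) ∧
    (∀ k : ℤ, ΘHd * Θy k - Θy k * ΘHd = -Θy k) ∧
    (∀ n : ℤ, ΘHd * (-ΘL (-n) + (((n : ℂ) + 1 - alf) / 2) • ΘH n
        + ((alf / 4 - alf ^ 2 / 8) * (Module.finrank ℂ V : ℂ) * deltaZ n) • 1)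
      = (-ΘL (-n) + (((n : ℂ) + 1 - alf) / 2) • ΘH n
        + ((alf / 4 - alf ^ 2 / 8) * (Module.finrank ℂ V : ℂ) * deltaZ n) • 1) * ΘHd) ∧
    (∀ n : ℤ, ΘHd * ΘE n = ΘE n * ΘHd) ∧
    (∀ n : ℤ, ΘHd * ΘH n = ΘH n * ΘHd) ∧
    (∀ n : ℤ, ΘHd * ΘF n = ΘF n * ΘHd) := by
  have hL : ∀ n : ℤ, ΘHd * ΘL n = ΘL n * ΘHd := by
    intro n
    have h := DerhatAux.master M ΘHd (ΘL n) (-1) 0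
      (fun p : ι × ℤ => ((p.2 : ℂ) - alf / 2) •
        (M.noτε p.1 ((p.2 + n : ℤ)) p.1 p.2 + M.noβγ p.1 ((p.2 + n : ℤ)) p.1 p.2))
      hfinHd (hfinL n)
      (fun w => by rw [hΘL]; exact (neg_one_smul ℂ _).symm) hΘHd
      (fun p w => by
        rw [zero_smul]
        exact DerhatAux.sumcomm_L M ((p.2 : ℂ) - alf / 2) p.1 (p.2 + n) p.2 w)
    rw [zero_smul] at h
    exact sub_eq_zero.mp h
  have hH : ∀ n : ℤ, ΘHd * ΘH n = ΘH n * ΘHd := by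
    intro n
    have h := DerhatAux.master M ΘHd (ΘH n) (-1) 0
      (fun p : ι × ℤ => M.noβγ p.1 p.2 p.1 ((p.2 + n : ℤ)))
      hfinHd (hfinH n)
      (fun w => by rw [hΘH]; exact (neg_one_smul ℂ _).symm) hΘHd
      (fun p w => by
        rw [zero_smul]
        exact DerhatAux.sumcomm_zero M _
          (fun q => DerhatAux.noβγ_comm_Tq M p.1 p.2 p.1 (p.2 + n) q) w)
    rw [zero_smul] at h
    exact sub_eq_zero.mp h
  refine ⟨?_, ?_, ?_, ?_, ?_, ?_, hH, ?_⟩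
  · -- 𝔵
    intro k
    have h := DerhatAux.master M ΘHd (Θx k) (-Complex.I) 1
      (fun p : ι × ℤ => ((p.2 : ℂ) - alf / 2) •
        (M.γ p.1 ((1 - p.2 + k : ℤ)) * M.ε p.1 p.2))
      hfinHd (hfinx k)
      (fun w => by rw [hΘx]; exact (neg_smul _ _).symm) hΘHd
      (fun p w => by
        rw [one_smul]
        exact DerhatAux.sumcomm_Xε M ((p.2 : ℂ) - alf / 2) (M.γ p.1 (1 - p.2 + k))
          (fun q => DerhatAux.γ_mul_T M p.1 (1 - p.2 + k) q) p.1 p.2 w)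
    rw [one_smul] at h
    exact h
  · -- 𝔥
    intro k
    have h := DerhatAux.master M ΘHd (Θh k) 1 (-1)
      (fun p : ι × ℤ => M.γ p.1 ((p.2 + k : ℤ)) * M.τ p.1 p.2)
      hfinHd (hfinh k)
      (fun w => by rw [hΘh]; exact (one_smul ℂ _).symm) hΘHd
      (fun p w => by
        rw [neg_one_smul]
        exact DerhatAux.sumcomm_Xτ' M (M.γ p.1 (p.2 + k))
          (fun q => DerhatAux.γ_mul_T M p.1 (p.2 + k) q) p.1 p.2 w)
    rw [neg_one_smul] at h
    exact h
  · -- 𝔭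
    intro k
    have h := DerhatAux.master M ΘHd (Θp k) 1 1
      (fun p : ι × ℤ => ((p.2 : ℂ) - alf / 2) •
        (M.β p.1 ((p.2 - k : ℤ)) * M.ε p.1 p.2))
      hfinHd (hfinp k)
      (fun w => by rw [hΘp]; exact (one_smul ℂ _).symm) hΘHd
      (fun p w => by
        rw [one_smul]
        exact DerhatAux.sumcomm_Xε M ((p.2 : ℂ) - alf / 2) (M.β p.1 (p.2 - k))
          (fun q => DerhatAux.β_mul_T M p.1 (p.2 - k) q) p.1 p.2 w)
    rw [one_smul] at h
    exact h
  · -- 𝔶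
    intro k
    have h := DerhatAux.master M ΘHd (Θy k) Complex.I (-1)
      (fun p : ι × ℤ => M.β p.1 p.2 * M.τ p.1 ((1 - p.2 - k : ℤ)))
      hfinHd (hfiny k)
      (fun w => hΘy k w) hΘHd
      (fun p w => by
        rw [neg_one_smul]
        exact DerhatAux.sumcomm_Xτ' M (M.β p.1 p.2)
          (fun q => DerhatAux.β_mul_T M p.1 p.2 q) p.1 (1 - p.2 - k) w)
    rw [neg_one_smul] at h
    exact h
  · -- ℒ (combined expression)
    intro n
    simp only [mul_add, add_mul, mul_neg, neg_mul, mul_smul_comm, smul_mul_assoc,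
      mul_one, one_mul, hL (-n), hH n]
  · -- E
    intro n
    have h := DerhatAux.master M ΘHd (ΘE n) (-(Complex.I / 2)) 0
      (fun p : ι × ℤ => M.γ p.1 p.2 * M.γ p.1 ((1 - p.2 + n : ℤ)))
      hfinHd (hfinE n)
      (fun w => by rw [hΘE]; exact (neg_smul _ _).symm) hΘHd
      (fun p w => by
        rw [zero_smul]
        exact DerhatAux.sumcomm_zero M _
          (fun q => DerhatAux.mul_comm_Tq M q
            (DerhatAux.γ_mul_T M p.1 p.2 q)
            (DerhatAux.γ_mul_T M p.1 (1 - p.2 + n) q)) w)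
    rw [zero_smul] at h
    exact sub_eq_zero.mp h
  · -- F
    intro n
    have h := DerhatAux.master M ΘHd (ΘF n) (-(Complex.I / 2)) 0
      (fun p : ι × ℤ => M.β p.1 p.2 * M.β p.1 ((1 - p.2 - n : ℤ)))
      hfinHd (hfinF n)
      (fun w => by rw [hΘF]; exact (neg_smul _ _).symm) hΘHd
      (fun p w => by
        rw [zero_smul]
        exact DerhatAux.sumcomm_zero M _
          (fun q => DerhatAux.mul_comm_Tq M q
            (DerhatAux.β_mul_T M p.1 p.2 q)
            (DerhatAux.β_mul_T M p.1 (1 - p.2 - n) q)) w)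
    rw [zero_smul] at h
    exact sub_eq_zero.mp h
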